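/- arXiv:1811.07808 — 2 statements merged into one kernel-verified Lean document; each statement's English description precedes it below -/
import Mathlib

section
/- For N ∈ ℕ and t ≥ 0 set σ_N(t) := ∑_{n ∈ ℤ³, |n| ≤ N} ( t/(2⟨n⟩²) − sin(2t⟨n⟩)/(4⟨n⟩³) ). Then: (a) each summand is nonnegative, and there exists an absolute constant C > 0 such that σ_N(t) ≤ C t N for all t ≥ 0 and all integers N ≥ 1; (b) there exists an absolute constant c > 0 such that σ_N(t) ≥ c t N whenever t > 0 and N ∈ ℕ satisfies N ≥ 2/t. In particular, for each fixed t > 0 one has σ_N(t) → ∞ as N → ∞. -/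
open scoped Classical

/-- Japanese bracket of a lattice point `n ∈ ℤ³`: `⟨n⟩ = (1 + |n|²)^{1/2}`. -/
noncomputable def jb (n : Fin 3 → ℤ) : ℝ :=
  Real.sqrt (1 + ∑ i, ((n i : ℝ)) ^ 2)

/-- Euclidean norm of a lattice point `n ∈ ℤ³`. -/
noncomputable def enorm' (n : Fin 3 → ℤ) : ℝ :=
  Real.sqrt (∑ i, ((n i : ℝ)) ^ 2)

/-- The lattice points `n ∈ ℤ³` with `|n| ≤ N` (as a finite set). -/
noncomputable def latticeBall (N : ℕ) : Finset (Fin 3 → ℤ) :=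
  (Finset.Icc (fun _ => -(N : ℤ)) (fun _ => (N : ℤ))).filter
    (fun n => enorm' n ≤ (N : ℝ))

/-- The renormalization constant
`σ_N(t) = ∑_{|n| ≤ N} ( t/(2⟨n⟩²) − sin(2t⟨n⟩)/(4⟨n⟩³) )`. -/
noncomputable def sigmaN (N : ℕ) (t : ℝ) : ℝ :=
  ∑ n ∈ latticeBall N,
    (t / (2 * jb n ^ 2) - Real.sin (2 * t * jb n) / (4 * jb n ^ 3))

/-! ### Auxiliary lemmas -/

lemma sumsq_nonneg (n : Fin 3 → ℤ) : 0 ≤ ∑ i, ((n i : ℝ)) ^ 2 :=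
  Finset.sum_nonneg fun _ _ => sq_nonneg _

lemma jb_sq (n : Fin 3 → ℤ) : jb n ^ 2 = 1 + ∑ i, ((n i : ℝ)) ^ 2 :=
  Real.sq_sqrt (by positivity)

lemma one_le_jb (n : Fin 3 → ℤ) : 1 ≤ jb n := by
  rw [show (1:ℝ) = Real.sqrt 1 by simp]
  exact Real.sqrt_le_sqrt (by linarith [sumsq_nonneg n])

lemma jb_pos (n : Fin 3 → ℤ) : 0 < jb n := lt_of_lt_of_le one_pos (one_le_jb n)

lemma summand_nonneg (t : ℝ) (ht : 0 ≤ t) (n : Fin 3 → ℤ) :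
    0 ≤ t / (2 * jb n ^ 2) - Real.sin (2 * t * jb n) / (4 * jb n ^ 3) := by
  have ha := jb_pos n
  have hs : Real.sin (2 * t * jb n) ≤ 2 * t * jb n := Real.sin_le (by positivity)
  have h1 : Real.sin (2 * t * jb n) / (4 * jb n ^ 3) ≤ (2 * t * jb n) / (4 * jb n ^ 3) := by
    gcongr
  have h2 : (2 * t * jb n) / (4 * jb n ^ 3) = t / (2 * jb n ^ 2) := by
    field_simp; ring
  linarith

lemma summand_le (t : ℝ) (ht : 0 ≤ t) (n : Fin 3 → ℤ) :
    t / (2 * jb n ^ 2) - Real.sin (2 * t * jb n) / (4 * jb n ^ 3) ≤ t / jb n ^ 2 := by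
  have ha := jb_pos n
  have hs : -(2 * t * jb n) ≤ Real.sin (2 * t * jb n) := by
    have hnn : 0 ≤ 2 * t * jb n := mul_nonneg (mul_nonneg (by norm_num) ht) ha.le
    have h := Real.abs_sin_le_abs (x := 2 * t * jb n)
    rw [abs_of_nonneg hnn] at h
    exact (abs_le.1 h).1
  have h1 : -((2 * t * jb n) / (4 * jb n ^ 3)) ≤ Real.sin (2 * t * jb n) / (4 * jb n ^ 3) := by
    rw [← neg_div]
    gcongr
  have h2 : (2 * t * jb n) / (4 * jb n ^ 3) = t / (2 * jb n ^ 2) := by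
    field_simp; ring
  have h3 : t / (2 * jb n ^ 2) + t / (2 * jb n ^ 2) = t / jb n ^ 2 := by
    field_simp; ring
  linarith

/-! ### Upper bound -/

noncomputable def g (k : ℤ) : ℝ := (1 + (k:ℝ) ^ 2) ^ (-(1/3) : ℝ)

lemma g_nonneg (k : ℤ) : 0 ≤ g k := Real.rpow_nonneg (by positivity) _

lemma cube_root_diff (N : ℕ) :
    ((N:ℝ)+1) ^ (-(2/3) : ℝ) ≤ 3 * (((N:ℝ)+1) ^ ((1/3):ℝ) - (N:ℝ) ^ ((1/3):ℝ)) := by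
  set a := ((N:ℝ)+1) ^ ((1/3):ℝ) with ha
  set b := (N:ℝ) ^ ((1/3):ℝ) with hb
  have hNnn : (0:ℝ) ≤ N := Nat.cast_nonneg N
  have ha3 : a ^ 3 = (N:ℝ) + 1 := by
    rw [ha, ← Real.rpow_natCast (((N:ℝ)+1) ^ ((1/3):ℝ)) 3, ← Real.rpow_mul (by positivity)]
    norm_num
  have hb3 : b ^ 3 = (N:ℝ) := by
    rw [hb, ← Real.rpow_natCast ((N:ℝ) ^ ((1/3):ℝ)) 3, ← Real.rpow_mul hNnn]
    norm_num
  have hapos : 0 < a := Real.rpow_pos_of_pos (by positivity) _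
  have hbnn : 0 ≤ b := Real.rpow_nonneg hNnn _
  have hba : b ≤ a := Real.rpow_le_rpow hNnn (by linarith) (by norm_num)
  have ha2 : ((N:ℝ)+1) ^ (-(2/3) : ℝ) = (a ^ 2)⁻¹ := by
    rw [ha, ← Real.rpow_natCast (((N:ℝ)+1) ^ ((1/3):ℝ)) 2, ← Real.rpow_mul (by positivity),
      ← Real.rpow_neg (by positivity)]
    norm_num
  rw [ha2, inv_le_iff_one_le_mul₀ (by positivity)]
  nlinarith [sq_nonneg (a - b), sq_nonneg (a + b)]

lemma g_le (k : ℤ) (N : ℕ) (hk : (k:ℝ) ^ 2 = ((N:ℝ)+1) ^ 2) :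
    g k ≤ ((N:ℝ)+1) ^ (-(2/3) : ℝ) := by
  have h1 : (((N:ℝ)+1) ^ (2:ℕ)) ^ (-(1/3) : ℝ) = ((N:ℝ)+1) ^ (-(2/3) : ℝ) := by
    rw [← Real.rpow_natCast ((N:ℝ)+1) 2, ← Real.rpow_mul (by positivity)]
    norm_num
  rw [g, hk, ← h1]
  exact Real.rpow_le_rpow_of_nonpos (by positivity) (by nlinarith) (by norm_num)

lemma sum_g_le (N : ℕ) :
    ∑ k ∈ Finset.Icc (-(N:ℤ)) (N:ℤ), g k ≤ 1 + 7 * (N:ℝ) ^ ((1/3) : ℝ) := by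
  induction N with
  | zero => simp [g, Real.zero_rpow]
  | succ N ih =>
    have hset : Finset.Icc (-((N:ℤ)+1)) ((N:ℤ)+1)
        = insert (-((N:ℤ)+1)) (insert ((N:ℤ)+1) (Finset.Icc (-(N:ℤ)) (N:ℤ))) := by
      ext k
      simp only [Finset.mem_Icc, Finset.mem_insert]
      omega
    have h1 : ((N+1:ℕ):ℤ) = (N:ℤ)+1 := by push_cast; ring
    rw [h1, hset, Finset.sum_insert (by simp only [Finset.mem_insert, Finset.mem_Icc]; omega),
      Finset.sum_insert (by simp only [Finset.mem_Icc]; omega)]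
    have hc : ((N+1:ℕ):ℝ) = (N:ℝ)+1 := by push_cast; ring
    rw [hc]
    have e1 : g (-((N:ℤ)+1)) ≤ ((N:ℝ)+1) ^ (-(2/3) : ℝ) := by
      apply g_le; push_cast; ring
    have e2 : g ((N:ℤ)+1) ≤ ((N:ℝ)+1) ^ (-(2/3) : ℝ) := by
      apply g_le; push_cast; ring
    have e3 := cube_root_diff N
    have e4 : (N:ℝ) ^ ((1/3):ℝ) ≤ ((N:ℝ)+1) ^ ((1/3):ℝ) :=
      Real.rpow_le_rpow (Nat.cast_nonneg N) (by linarith) (by norm_num)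
    linarith

lemma sum_g_le' (N : ℕ) (hN : 1 ≤ N) :
    ∑ k ∈ Finset.Icc (-(N:ℤ)) (N:ℤ), g k ≤ 8 * (N:ℝ) ^ ((1/3) : ℝ) := by
  have h2 : (1:ℝ) ≤ (N:ℝ) := by exact_mod_cast hN
  have h1 : (1:ℝ) ≤ (N:ℝ) ^ ((1/3) : ℝ) := by
    calc (1:ℝ) = (1:ℝ) ^ ((1/3):ℝ) := by simp
    _ ≤ (N:ℝ) ^ ((1/3):ℝ) := Real.rpow_le_rpow zero_le_one h2 (by norm_num)
  have := sum_g_le N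
  linarith

lemma inv_le_prod_g (n : Fin 3 → ℤ) :
    1 / (1 + ∑ i, ((n i : ℝ)) ^ 2) ≤ ∏ i, g (n i) := by
  set S := ∑ i, ((n i : ℝ)) ^ 2 with hS
  have hSnn : 0 ≤ S := Finset.sum_nonneg fun i _ => sq_nonneg _
  set P := ∏ i, (1 + ((n i : ℝ)) ^ 2) with hP
  have hfac : ∀ i : Fin 3, (0:ℝ) < 1 + ((n i : ℝ)) ^ 2 := fun i => by positivity
  have hPpos : 0 < P := Finset.prod_pos fun i _ => hfac i
  have hfle : ∀ i : Fin 3, 1 + ((n i : ℝ)) ^ 2 ≤ 1 + S := by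
    intro i
    have : ((n i : ℝ)) ^ 2 ≤ S :=
      Finset.single_le_sum (fun j _ => sq_nonneg ((n j : ℝ))) (Finset.mem_univ i)
    linarith
  have hPle : P ≤ (1 + S) ^ 3 := by
    calc P ≤ ∏ _i : Fin 3, (1 + S) :=
          Finset.prod_le_prod (fun i _ => (hfac i).le) (fun i _ => hfle i)
    _ = (1 + S) ^ 3 := by simp [Finset.prod_const]
  have hprod : ∏ i, g (n i) = P ^ (-(1/3) : ℝ) := by
    rw [hP, ← Real.finset_prod_rpow _ _ (fun i _ => (hfac i).le)]
    simp only [g]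
  rw [hprod, Real.rpow_neg hPpos.le, one_div]
  have hcube : (P ^ ((1/3) : ℝ)) ≤ 1 + S := by
    calc P ^ ((1/3) : ℝ) ≤ ((1 + S) ^ 3) ^ ((1/3) : ℝ) :=
          Real.rpow_le_rpow hPpos.le hPle (by norm_num)
    _ = 1 + S := by
        rw [← Real.rpow_natCast (1 + S) 3, ← Real.rpow_mul (by linarith)]
        norm_num
  exact inv_anti₀ (Real.rpow_pos_of_pos hPpos _) hcube

lemma box_eq (N : ℕ) :
    (Finset.Icc (fun _ => -(N:ℤ)) (fun _ => (N:ℤ)) : Finset (Fin 3 → ℤ))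
      = Fintype.piFinset (fun _ : Fin 3 => Finset.Icc (-(N:ℤ)) (N:ℤ)) := by
  ext n
  simp [Finset.mem_Icc, Fintype.mem_piFinset, Pi.le_def, forall_and]

lemma sum_box (N : ℕ) :
    ∑ n ∈ (Finset.Icc (fun _ => -(N:ℤ)) (fun _ => (N:ℤ)) : Finset (Fin 3 → ℤ)),
      ∏ i, g (n i) = (∑ k ∈ Finset.Icc (-(N:ℤ)) (N:ℤ), g k) ^ 3 := by
  rw [box_eq, ← Finset.prod_univ_sum]
  simp [Finset.prod_const]

lemma sigma_upper (t : ℝ) (ht : 0 ≤ t) (N : ℕ) (hN : 1 ≤ N) :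
    sigmaN N t ≤ 512 * t * N := by
  have step1 : sigmaN N t ≤ ∑ n ∈ latticeBall N, t / jb n ^ 2 :=
    Finset.sum_le_sum fun n _ => summand_le t ht n
  have step2 : ∑ n ∈ latticeBall N, t / jb n ^ 2
      ≤ ∑ n ∈ (Finset.Icc (fun _ => -(N:ℤ)) (fun _ => (N:ℤ)) : Finset (Fin 3 → ℤ)),
          t / jb n ^ 2 := by
    apply Finset.sum_le_sum_of_subset_of_nonneg (Finset.filter_subset _ _)
    intro n _ _
    exact div_nonneg ht (by positivity)
  have step3 : ∀ n : Fin 3 → ℤ, t / jb n ^ 2 ≤ t * ∏ i, g (n i) := by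
    intro n
    rw [jb_sq, div_eq_mul_one_div]
    exact mul_le_mul_of_nonneg_left (inv_le_prod_g n) ht
  have step4 : ∑ n ∈ (Finset.Icc (fun _ => -(N:ℤ)) (fun _ => (N:ℤ)) : Finset (Fin 3 → ℤ)),
      t / jb n ^ 2 ≤ t * (∑ k ∈ Finset.Icc (-(N:ℤ)) (N:ℤ), g k) ^ 3 := by
    rw [← sum_box, Finset.mul_sum]
    exact Finset.sum_le_sum fun n _ => step3 n
  have hg : (∑ k ∈ Finset.Icc (-(N:ℤ)) (N:ℤ), g k) ^ 3 ≤ 512 * (N:ℝ) := by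
    have h8 : (8 * (N:ℝ) ^ ((1/3):ℝ)) ^ 3 = 512 * (N:ℝ) := by
      rw [mul_pow, ← Real.rpow_natCast ((N:ℝ) ^ ((1/3):ℝ)) 3,
        ← Real.rpow_mul (Nat.cast_nonneg N)]
      norm_num
    have hnn : 0 ≤ ∑ k ∈ Finset.Icc (-(N:ℤ)) (N:ℤ), g k :=
      Finset.sum_nonneg fun k _ => g_nonneg k
    calc (∑ k ∈ Finset.Icc (-(N:ℤ)) (N:ℤ), g k) ^ 3
        ≤ (8 * (N:ℝ) ^ ((1/3):ℝ)) ^ 3 := by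
          exact pow_le_pow_left₀ hnn (sum_g_le' N hN) 3
    _ = 512 * (N:ℝ) := h8
  calc sigmaN N t ≤ t * (∑ k ∈ Finset.Icc (-(N:ℤ)) (N:ℤ), g k) ^ 3 :=
        le_trans step1 (le_trans step2 step4)
  _ ≤ t * (512 * (N:ℝ)) := mul_le_mul_of_nonneg_left hg ht
  _ = 512 * t * N := by ring

/-! ### Lower bound -/

lemma summand_ge (t : ℝ) (n : Fin 3 → ℤ) (hx : 1 ≤ t * jb n) :
    t / (4 * jb n ^ 2) ≤ t / (2 * jb n ^ 2) - Real.sin (2 * t * jb n) / (4 * jb n ^ 3) := by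
  have ha := jb_pos n
  have h1 : Real.sin (2 * t * jb n) ≤ t * jb n := le_trans (Real.sin_le_one _) hx
  have h2 : Real.sin (2 * t * jb n) / (4 * jb n ^ 3) ≤ (t * jb n) / (4 * jb n ^ 3) := by gcongr
  have h3 : (t * jb n) / (4 * jb n ^ 3) = t / (4 * jb n ^ 2) := by field_simp
  have h4 : t / (2 * jb n ^ 2) = t / (4 * jb n ^ 2) + t / (4 * jb n ^ 2) := by field_simp; ring
  linarith

lemma zero_mem_ball (N : ℕ) (hN : 1 ≤ N) : (fun _ => (0:ℤ)) ∈ latticeBall N := by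
  have hN' : (1:ℝ) ≤ (N:ℝ) := by exact_mod_cast hN
  refine Finset.mem_filter.2 ⟨Finset.mem_Icc.2 ⟨?_, ?_⟩, ?_⟩
  · intro i; simp
  · intro i; simp
  · simpa [enorm'] using by linarith

lemma jb_zero : jb (fun _ => (0:ℤ)) = 1 := by simp [jb]

def kk (N : ℕ) : ℤ := ((N:ℤ) + 2) / 3
def mm (N : ℕ) : ℤ := (N:ℤ) / 2

lemma A_sub (N : ℕ) (hN : 2 ≤ N) :
    (Finset.Icc (fun _ : Fin 3 => kk N) (fun _ => mm N)) ⊆ latticeBall N := by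
  intro n hn
  rw [Finset.mem_Icc, Pi.le_def, Pi.le_def] at hn
  obtain ⟨hl, hr⟩ := hn
  have hb : ∀ i, 1 ≤ n i ∧ 2 * n i ≤ (N:ℤ) := by
    intro i
    have h1 := hl i
    have h2 := hr i
    simp only [kk, mm] at h1 h2
    omega
  have hreal : ∀ i, (1:ℝ) ≤ (n i : ℝ) ∧ (2:ℝ) * (n i : ℝ) ≤ (N:ℝ) := by
    intro i
    refine ⟨by exact_mod_cast (hb i).1, by exact_mod_cast (hb i).2⟩
  refine Finset.mem_filter.2 ⟨Finset.mem_Icc.2 ⟨?_, ?_⟩, ?_⟩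
  · intro i; have := (hb i).1; have := (hb i).2; simp; omega
  · intro i; have := (hb i).1; have := (hb i).2; simp; omega
  · have hsum : ∑ i, ((n i : ℝ)) ^ 2 ≤ (N:ℝ) ^ 2 := by
      rw [Fin.sum_univ_three]
      have h0 := hreal 0; have h1 := hreal 1; have h2 := hreal 2
      nlinarith [h0.1, h0.2, h1.1, h1.2, h2.1, h2.2]
    calc enorm' n ≤ Real.sqrt ((N:ℝ)^2) := Real.sqrt_le_sqrt hsum
    _ = (N:ℝ) := Real.sqrt_sq (Nat.cast_nonneg N)

lemma jb_bounds (N : ℕ) (hN : 2 ≤ N) (n : Fin 3 → ℤ)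
    (hn : n ∈ Finset.Icc (fun _ : Fin 3 => kk N) (fun _ => mm N)) :
    (N:ℝ) / 2 ≤ jb n ∧ jb n ^ 2 ≤ 2 * (N:ℝ) ^ 2 := by
  rw [Finset.mem_Icc, Pi.le_def, Pi.le_def] at hn
  obtain ⟨hl, hr⟩ := hn
  have hb : ∀ i, (N:ℤ) ≤ 3 * n i ∧ 2 * n i ≤ (N:ℤ) ∧ 1 ≤ n i := by
    intro i
    have h1 := hl i
    have h2 := hr i
    simp only [kk, mm] at h1 h2
    omega
  have hreal : ∀ i, (N:ℝ) ≤ 3 * (n i : ℝ) ∧ (2:ℝ) * (n i : ℝ) ≤ (N:ℝ) ∧ (1:ℝ) ≤ (n i:ℝ) := by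
    intro i
    refine ⟨by exact_mod_cast (hb i).1, by exact_mod_cast (hb i).2.1, by exact_mod_cast (hb i).2.2⟩
  have hNr : (2:ℝ) ≤ (N:ℝ) := by exact_mod_cast hN
  have h0 := hreal 0; have h1 := hreal 1; have h2 := hreal 2
  have hsq := jb_sq n
  rw [Fin.sum_univ_three] at hsq
  constructor
  · have hlow : ((N:ℝ)/2) ^ 2 ≤ jb n ^ 2 := by nlinarith
    have := jb_pos n
    nlinarith
  · nlinarith

lemma card_A (N : ℕ) (hN : 2 ≤ N) :
    ((N:ℝ)/12) ^ 3 ≤ ((Finset.Icc (fun _ : Fin 3 => kk N) (fun _ => mm N)).card : ℝ) := by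
  rw [Pi.card_Icc]
  simp only [Int.card_Icc, Finset.prod_const, Finset.card_univ, Fintype.card_fin]
  have h12 : (N:ℤ) ≤ 12 * (mm N - kk N + 1) := by simp only [kk, mm]; omega
  have hpos : 0 ≤ mm N - kk N + 1 := by simp only [kk, mm]; omega
  have hr : (N:ℝ)/12 ≤ (((mm N + 1 - kk N).toNat : ℤ) : ℝ) := by
    rw [Int.toNat_of_nonneg (by omega)]
    have : ((N:ℤ):ℝ) ≤ ((12 * (mm N - kk N + 1) : ℤ) : ℝ) := by exact_mod_cast h12
    push_cast at this ⊢
    linarith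
  have hNnn : (0:ℝ) ≤ (N:ℝ)/12 := by positivity
  push_cast
  push_cast at hr
  exact pow_le_pow_left₀ hNnn hr 3

lemma sigma_lower (t : ℝ) (ht : 0 < t) (N : ℕ) (hN : 2 / t ≤ (N : ℝ)) :
    (1/13824) * t * N ≤ sigmaN N t := by
  have htN : 2 ≤ t * N := by
    rw [div_le_iff₀ ht] at hN
    linarith
  have hN1 : 1 ≤ N := by
    by_contra h
    push_neg at h
    interval_cases N
    · simp at htN; nlinarith [ht]
  rcases eq_or_lt_of_le hN1 with h1 | h2
  · -- N = 1
    have hNe : N = 1 := h1.symm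
    subst hNe
    have ht2 : 2 ≤ t := by simpa using htN
    have h0 := summand_ge t (fun _ => (0:ℤ)) (by rw [jb_zero]; linarith)
    rw [jb_zero] at h0
    norm_num at h0
    have hsum : t / (2 * jb (fun _ => (0:ℤ)) ^ 2)
        - Real.sin (2 * t * jb (fun _ => (0:ℤ))) / (4 * jb (fun _ => (0:ℤ)) ^ 3)
        ≤ sigmaN 1 t :=
      Finset.single_le_sum (f := fun n => t / (2 * jb n ^ 2)
        - Real.sin (2 * t * jb n) / (4 * jb n ^ 3))
        (fun n _ => summand_nonneg t ht.le n) (zero_mem_ball 1 le_rfl)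
    rw [jb_zero] at hsum
    norm_num at hsum
    norm_num
    linarith
  · -- N ≥ 2
    have hN2 : 2 ≤ N := h2
    have hNr : (2:ℝ) ≤ (N:ℝ) := by exact_mod_cast hN2
    set A := Finset.Icc (fun _ : Fin 3 => kk N) (fun _ => mm N) with hA
    have hterm : ∀ n ∈ A, t / (8 * (N:ℝ)^2)
        ≤ t / (2 * jb n ^ 2) - Real.sin (2 * t * jb n) / (4 * jb n ^ 3) := by
      intro n hn
      obtain ⟨hjl, hju⟩ := jb_bounds N hN2 n hn
      have hx : 1 ≤ t * jb n := by
        have : t * ((N:ℝ)/2) ≤ t * jb n := mul_le_mul_of_nonneg_left hjl ht.le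
        nlinarith
      refine le_trans ?_ (summand_ge t n hx)
      have hjp := jb_pos n
      apply div_le_div_of_nonneg_left ht.le (by positivity)
      nlinarith
    have hsumA : (A.card : ℝ) * (t / (8 * (N:ℝ)^2))
        ≤ ∑ n ∈ A, (t / (2 * jb n ^ 2) - Real.sin (2 * t * jb n) / (4 * jb n ^ 3)) := by
      have := Finset.card_nsmul_le_sum A _ _ hterm
      simpa [nsmul_eq_mul] using this
    have hsub : ∑ n ∈ A, (t / (2 * jb n ^ 2) - Real.sin (2 * t * jb n) / (4 * jb n ^ 3))
        ≤ sigmaN N t :=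
      Finset.sum_le_sum_of_subset_of_nonneg (A_sub N hN2)
        (fun n _ _ => summand_nonneg t ht.le n)
    have hcard := card_A N hN2
    have hbnn : 0 ≤ t / (8 * (N:ℝ)^2) := by positivity
    have hchain : ((N:ℝ)/12)^3 * (t / (8 * (N:ℝ)^2)) ≤ sigmaN N t := by
      calc ((N:ℝ)/12)^3 * (t / (8 * (N:ℝ)^2))
          ≤ (A.card : ℝ) * (t / (8 * (N:ℝ)^2)) := mul_le_mul_of_nonneg_right hcard hbnn
      _ ≤ _ := le_trans hsumA hsub
    have heq : ((N:ℝ)/12)^3 * (t / (8 * (N:ℝ)^2)) = (1/13824) * t * N := by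
      have hNne : (N:ℝ) ≠ 0 := by positivity
      field_simp
      ring
    linarith [heq ▸ hchain]

theorem renormalization_constant_growth :
    -- (a) each summand is nonnegative
    (∀ t : ℝ, 0 ≤ t → ∀ n : Fin 3 → ℤ,
        0 ≤ t / (2 * jb n ^ 2) - Real.sin (2 * t * jb n) / (4 * jb n ^ 3)) ∧
    -- (a) upper bound σ_N(t) ≤ C t N
    (∃ C : ℝ, 0 < C ∧ ∀ t : ℝ, 0 ≤ t → ∀ N : ℕ, 1 ≤ N →
        sigmaN N t ≤ C * t * N) ∧
    -- (b) lower bound σ_N(t) ≥ c t N for N ≥ 2/t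
    (∃ c : ℝ, 0 < c ∧ ∀ t : ℝ, 0 < t → ∀ N : ℕ, 2 / t ≤ (N : ℝ) →
        c * t * N ≤ sigmaN N t) ∧
    -- in particular, σ_N(t) → ∞ as N → ∞ for each fixed t > 0
    (∀ t : ℝ, 0 < t →
        Filter.Tendsto (fun N : ℕ => sigmaN N t) Filter.atTop Filter.atTop) := by
  refine ⟨summand_nonneg, ⟨512, by norm_num, fun t ht N hN => sigma_upper t ht N hN⟩,
    ⟨1/13824, by norm_num, fun t ht N hN => sigma_lower t ht N hN⟩, ?_⟩
  intro t ht
  have hc : (0:ℝ) < 1/13824 * t := by positivity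
  have htends : Filter.Tendsto (fun N : ℕ => 1/13824 * t * (N:ℝ))
      Filter.atTop Filter.atTop := by
    simpa [mul_assoc] using (tendsto_natCast_atTop_atTop (R := ℝ)).const_mul_atTop hc
  apply Filter.tendsto_atTop_mono' _ _ htends
  filter_upwards [(tendsto_natCast_atTop_atTop (R := ℝ)).eventually_ge_atTop (2/t)] with N hN
  exact sigma_lower t ht N hN
end

section
/- For every T > 0, every θ ∈ (0, 1/2] and every δ ∈ (0, 1] there exists a constant C > 0 such that for every n ∈ ℤ³, every N ∈ ℕ and every τ ∈ [0, T]: | ∑_{n₂ ∈ ℤ³ : ⟨n⟩ ≤ ⟨n₂⟩^θ and |n₂| ≤ N} sin(τ(⟨n + n₂⟩ − ⟨n₂⟩)) / (⟨n + n₂⟩ ⟨n₂⟩²) | ≤ C ⟨n⟩^δ. In particular, although the sum is not absolutely convergent as N → ∞, its truncations are bounded uniformly in N. -/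
open scoped Classical

lemma jb_neg (n : Fin 3 → ℤ) : jb (-n) = jb n := by simp [jb]

lemma jb_add_sq (n m : Fin 3 → ℤ) :
    jb (n + m) ^ 2 = jb m ^ 2 + 2 * (∑ i, (n i : ℝ) * (m i : ℝ)) + ∑ i, (n i : ℝ) ^ 2 := by
  rw [jb_sq, jb_sq]
  have h : ∀ i ∈ Finset.univ, (((n + m) i : ℤ) : ℝ) ^ 2
      = (m i:ℝ)^2 + 2*((n i:ℝ)*(m i:ℝ)) + (n i:ℝ)^2 := by
    intro i _
    simp only [Pi.add_apply]
    push_cast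
    ring
  rw [Finset.sum_congr rfl h, Finset.sum_add_distrib, Finset.sum_add_distrib, ← Finset.mul_sum]
  ring

lemma key1 (A B M e p : ℝ) (hA : 1 ≤ A) (hB : 1 ≤ B) (hM : 1 ≤ M) (he : 0 ≤ e)
    (hA2 : A^2 = M^2 + 2*p + e) (hB2 : B^2 = M^2 - 2*p + e)
    (hp : p^2 ≤ e * M^2) :
    |A + B - 2*M| ≤ 10 * e / M := by
  have hM0 : 0 < M := by linarith
  have hA0 : 0 < A := by linarith
  have hB0 : 0 < B := by linarith
  have hABpos : 0 < A + B := by linarith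
  have hD : 0 < (A + M) * (B + M) := by positivity
  have hABge : M ≤ A + B := by nlinarith [mul_pos hA0 hB0]
  have hid : (A + B - 2*M) * ((A+M)*(B+M)) = e*(A+B+2*M) + 2*p*(B-A) := by
    linear_combination (B+M)*hA2 + (A+M)*hB2
  have h2p : (2*p*(B-A)) * (A+B) = -(8*p^2) := by
    linear_combination 2*p*(hB2 - hA2)
  have h2p_up : 2*p*(B-A) ≤ 0 := by
    nlinarith [h2p, sq_nonneg p, hABpos]
  have h2p_lo : -(8*e*M) ≤ 2*p*(B-A) := by
    nlinarith [h2p, hp, hABpos, mul_nonneg (mul_nonneg he hM0.le)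
      (by linarith : (0:ℝ) ≤ A + B - M)]
  rw [abs_le]
  constructor
  · rw [neg_le, ← neg_sub (2*M), le_div_iff₀ hM0, ← mul_le_mul_iff_of_pos_right hD]
    nlinarith [hid, mul_le_mul_of_nonneg_left h2p_lo hM0.le,
      mul_nonneg he (mul_pos hA0 hB0).le, mul_nonneg he (mul_pos hM0 hA0).le,
      mul_nonneg he (mul_pos hM0 hB0).le, mul_nonneg he (mul_pos hM0 hM0).le,
      mul_nonneg he (mul_pos hM0 hABpos).le]
  · rw [le_div_iff₀ hM0, ← mul_le_mul_iff_of_pos_right hD]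
    nlinarith [hid, mul_nonpos_of_nonneg_of_nonpos hM0.le h2p_up,
      mul_nonneg he (mul_pos hA0 hB0).le, mul_nonneg he (mul_pos hM0 hA0).le,
      mul_nonneg he (mul_pos hM0 hB0).le, mul_nonneg he (mul_pos hM0 hM0).le]

lemma abs_sin_add_sin_le (x y : ℝ) : |Real.sin x + Real.sin y| ≤ |x + y| := by
  have h : Real.sin x + Real.sin y = Real.sin x - Real.sin (-y) := by
    rw [Real.sin_neg]; ring
  rw [h, Real.sin_sub_sin]
  calc |2 * Real.sin ((x - -y)/2) * Real.cos ((x + -y)/2)|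
      = 2 * |Real.sin ((x - -y)/2)| * |Real.cos ((x + -y)/2)| := by
        rw [abs_mul, abs_mul]; norm_num
    _ ≤ 2 * |(x - -y)/2| * 1 :=
        mul_le_mul (by gcongr 2 * ?_; exact Real.abs_sin_le_abs)
          (Real.abs_cos_le_one _) (abs_nonneg _) (by positivity)
    _ = |x + y| := by
        rw [abs_div, mul_one, sub_neg_eq_add]
        norm_num [abs_of_pos]; ring

set_option maxHeartbeats 2000000 in
lemma pair_est (T τ A B M e p jn : ℝ) (hτ0 : 0 ≤ τ) (hτT : τ ≤ T)
    (hA1 : 1 ≤ A) (hB1 : 1 ≤ B) (hM1 : 1 ≤ M) (hjn1 : 1 ≤ jn) (he : 0 ≤ e)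
    (hA2 : A^2 = M^2 + 2*p + e) (hB2 : B^2 = M^2 - 2*p + e)
    (hp2 : p^2 ≤ e * M^2) (he_le : e ≤ jn^2) (hjsq : jn^2 ≤ M) :
    |Real.sin (τ * (A - M)) / (A * M^2) + Real.sin (τ * (B - M)) / (B * M^2)|
      ≤ (80 * T + 256) * (jn^2 / M^4) := by
  have hM0 : 0 < M := by linarith
  have hA0 : 0 < A := by linarith
  have hB0 : 0 < B := by linarith
  have hjn0 : 0 < jn := by linarith
  have hpabs : |p| ≤ jn * M := by
    have h1 : p^2 ≤ (jn * M)^2 := by nlinarith [hp2, he_le, sq_nonneg M]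
    calc |p| = Real.sqrt (p^2) := (Real.sqrt_sq_eq_abs p).symm
      _ ≤ Real.sqrt ((jn * M)^2) := Real.sqrt_le_sqrt h1
      _ = jn * M := Real.sqrt_sq (by positivity)
  have hA_lb : M / 8 ≤ A := by
    rcases le_or_gt M 8 with h | h
    · linarith
    · have hjn_le : jn ≤ 17 * M / 48 := by nlinarith [sq_nonneg (jn - 3), hjsq, h]
      have hpM : |p| ≤ 17 * M^2 / 48 := hpabs.trans (by
        have := mul_le_mul_of_nonneg_right hjn_le hM0.le
        nlinarith [this])
      have h1 : M^2/64 ≤ A^2 := by linarith [neg_abs_le p, sq_nonneg M]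
      nlinarith [h1, hA0, hM0]
  have hB_lb : M / 8 ≤ B := by
    rcases le_or_gt M 8 with h | h
    · linarith
    · have hjn_le : jn ≤ 17 * M / 48 := by nlinarith [sq_nonneg (jn - 3), hjsq, h]
      have hpM : |p| ≤ 17 * M^2 / 48 := hpabs.trans (by
        have := mul_le_mul_of_nonneg_right hjn_le hM0.le
        nlinarith [this])
      have h1 : M^2/64 ≤ B^2 := by linarith [le_abs_self p, sq_nonneg M]
      nlinarith [h1, hB0, hM0]
  have hABpos : 0 < A + B := by linarith
  have hABge : M ≤ A + B := by
    have h1 : M^2 ≤ (A+B)^2 := by nlinarith [mul_pos hA0 hB0, he]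
    nlinarith [h1, hABpos, hM0]
  have habsum : |A + B - 2*M| ≤ 10 * e / M := key1 A B M e p hA1 hB1 hM1 he hA2 hB2 hp2
  have hABdiff : |A - B| ≤ 4 * jn := by
    have hd : (A - B) * (A + B) = 4 * p := by linear_combination hA2 - hB2
    have h1 : |A - B| * (A + B) = 4 * |p| := by
      rw [← abs_of_pos hABpos, ← abs_mul, hd, abs_mul]
      norm_num
    nlinarith [h1, hpabs, hABge, abs_nonneg (A - B), mul_nonneg hjn0.le
      (by linarith : (0:ℝ) ≤ A + B - M)]
  have hsin : |Real.sin (τ * (A - M)) + Real.sin (τ * (B - M))| ≤ τ * (10 * e / M) := by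
    calc |Real.sin (τ * (A - M)) + Real.sin (τ * (B - M))|
        ≤ |τ * (A - M) + τ * (B - M)| := abs_sin_add_sin_le _ _
      _ = |τ| * |A + B - 2*M| := by
          rw [show τ * (A - M) + τ * (B - M) = τ * (A + B - 2*M) by ring, abs_mul]
      _ ≤ τ * (10 * e / M) := by
          rw [abs_of_nonneg hτ0]
          exact mul_le_mul_of_nonneg_left habsum hτ0
  have hexpr : Real.sin (τ * (A - M)) / (A * M^2) + Real.sin (τ * (B - M)) / (B * M^2)
      = (Real.sin (τ * (A - M)) + Real.sin (τ * (B - M))) / (A * M^2)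
        + Real.sin (τ * (B - M)) * ((A - B) / (A * B * M^2)) := by
    field_simp
    ring
  rw [hexpr]
  have hT0 : 0 ≤ T := le_trans hτ0 hτT
  have hnum1 : |Real.sin (τ * (A - M)) + Real.sin (τ * (B - M))| ≤ T * (10 * jn^2 / M) := by
    refine hsin.trans ?_
    apply mul_le_mul hτT ?_ (by positivity) hT0
    gcongr
  have hnum2 : |Real.sin (τ * (B - M))| ≤ 1 := Real.abs_sin_le_one _
  calc |(Real.sin (τ * (A - M)) + Real.sin (τ * (B - M))) / (A * M^2)
        + Real.sin (τ * (B - M)) * ((A - B) / (A * B * M^2))|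
      ≤ |Real.sin (τ * (A - M)) + Real.sin (τ * (B - M))| / (A * M^2)
        + |Real.sin (τ * (B - M))| * (|A - B| / (A * B * M^2)) := by
        refine (abs_add_le _ _).trans (le_of_eq ?_)
        simp only [abs_div, abs_mul, abs_pow, abs_of_pos hA0, abs_of_pos hB0, abs_of_pos hM0]
    _ ≤ (T * (10 * jn^2 / M)) / ((M/8) * M^2)
        + 1 * ((4 * jn) / ((M/8) * (M/8) * M^2)) := by
        gcongr <;> first | positivity | assumption
    _ = (80 * T * jn^2 + 256 * jn) / M^4 := by
        field_simp
        ring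
    _ ≤ (80 * T * jn^2 + 256 * jn^2) / M^4 := by
        gcongr
        nlinarith [hjn1]
    _ = (80 * T + 256) * (jn^2 / M^4) := by ring

set_option maxHeartbeats 1000000 in
lemma pair_bound (T τ : ℝ) (hτ0 : 0 ≤ τ) (hτT : τ ≤ T) (n n₂ : Fin 3 → ℤ)
    (hjsq : jb n ^ 2 ≤ jb n₂) :
    |Real.sin (τ * (jb (n + n₂) - jb n₂)) / (jb (n + n₂) * jb n₂ ^ 2)
      + Real.sin (τ * (jb (n + -n₂) - jb n₂)) / (jb (n + -n₂) * jb n₂ ^ 2)|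
      ≤ (80 * T + 256) * (jb n ^ 2 / jb n₂ ^ 4) := by
  have hB2 : jb (n + -n₂) ^ 2 = jb n₂ ^ 2 - 2 * (∑ i, (n i : ℝ) * (n₂ i : ℝ)) + ∑ i, (n i : ℝ) ^ 2 := by
    rw [jb_add_sq, jb_neg]
    have h : (∑ i, (n i : ℝ) * (((-n₂) i : ℤ) : ℝ)) = -(∑ i, (n i : ℝ) * (n₂ i : ℝ)) := by
      rw [← Finset.sum_neg_distrib]
      apply Finset.sum_congr rfl
      intro i _
      simp [Pi.neg_apply]
    rw [h]
    ring
  have hCS := Finset.sum_mul_sq_le_sq_mul_sq Finset.univ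
    (fun i => (n i : ℝ)) (fun i => (n₂ i : ℝ))
  have hn2sq : (∑ i, ((n₂ i : ℝ))^2) = jb n₂^2 - 1 := by rw [jb_sq]; ring
  have hp2 : (∑ i, (n i : ℝ) * (n₂ i : ℝ))^2 ≤ (∑ i, (n i : ℝ)^2) * jb n₂^2 := by
    have h1 : (∑ i, (n i : ℝ) * (n₂ i : ℝ))^2 ≤ (∑ i, (n i : ℝ)^2) * (jb n₂^2 - 1) := by
      rw [← hn2sq]; exact hCS
    nlinarith [h1, show (0:ℝ) ≤ ∑ i, (n i : ℝ)^2 by positivity]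
  have he_le : (∑ i, (n i : ℝ)^2) ≤ jb n ^ 2 := by
    rw [jb_sq]; linarith [show (0:ℝ) ≤ ∑ i, (n i : ℝ)^2 by positivity]
  exact pair_est T τ (jb (n + n₂)) (jb (n + -n₂)) (jb n₂) _ _ (jb n) hτ0 hτT
    (one_le_jb _) (one_le_jb _) (one_le_jb _) (one_le_jb _) (by positivity)
    (jb_add_sq n n₂) hB2 hp2 he_le hjsq

lemma enorm'_neg (n : Fin 3 → ℤ) : enorm' (-n) = enorm' n := by simp [enorm']

set_option maxHeartbeats 1000000 in
lemma count_bound (ε : ℝ) (hε : 0 < ε) :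
    ∃ K : ℝ, 0 < K ∧ ∀ N : ℕ,
      ∑ n₂ ∈ Finset.Icc (fun _ => -(N : ℤ)) (fun _ => (N : ℤ)), jb n₂ ^ (-(3+ε)) ≤ K := by
  set q : ℝ := (3+ε)/6 with hq
  have hq0 : 0 < q := by rw [hq]; linarith
  have hq2 : 1 < 2*q := by rw [hq]; linarith
  set u : ℤ → ℝ := fun k => (1 + (k:ℝ)^2) ^ (-q) with hu
  have hu_pos : ∀ k, 0 < u k := fun k => Real.rpow_pos_of_pos (by positivity) _
  have hsum : Summable u := by
    have hv : Summable (fun k : ℤ => |(k:ℝ)| ^ (-(2*q))) := Real.summable_abs_int_rpow hq2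
    have hw : Summable (fun k : ℤ => if k = 0 then (1:ℝ) else 0) := by
      apply summable_of_ne_finset_zero (s := {(0:ℤ)})
      intro b hb
      simp only [Finset.mem_singleton] at hb
      simp [hb]
    apply Summable.of_nonneg_of_le (fun k => (hu_pos k).le) ?_ (hv.add hw)
    intro k
    by_cases hk : k = 0
    · subst hk
      have e2 : |((0:ℤ):ℝ)| ^ (-(2*q)) = 0 := by
        rw [show |((0:ℤ):ℝ)| = 0 by norm_num]
        exact Real.zero_rpow (fun h => by linarith)
      simp [hu, e2, Real.one_rpow]
      positivity
    · have hk1 : (1:ℝ) ≤ ((k:ℝ))^2 := by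
        have h1 : (1:ℤ) ≤ k^2 := by
          rcases lt_or_gt_of_ne hk with h | h <;> nlinarith
        exact_mod_cast h1
      have h1 : |(k:ℝ)| ^ (-(2*q)) = (((k:ℝ))^2) ^ (-q) := by
        rw [show ((k:ℝ)^2) = |(k:ℝ)|^(2:ℕ) by rw [sq_abs], ← Real.rpow_natCast |(k:ℝ)| 2,
          ← Real.rpow_mul (abs_nonneg _)]
        norm_num
      have h2 : u k ≤ |(k:ℝ)| ^ (-(2*q)) := by
        rw [h1, hu]
        exact Real.rpow_le_rpow_of_nonpos (by linarith) (by linarith) (by linarith)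
      simp only [hk, if_false]
      linarith
  set S : ℝ := ∑' k, u k with hS
  have hS1 : 1 ≤ S := by
    have h1 := Summable.le_tsum hsum 0 (fun j _ => (hu_pos j).le)
    have h2 : u 0 = 1 := by simp [hu]
    rw [h2] at h1
    exact h1
  refine ⟨S^3, by positivity, fun N => ?_⟩
  have hpt : ∀ n₂ : Fin 3 → ℤ, jb n₂ ^ (-(3+ε)) ≤ ∏ i, u (n₂ i) := by
    intro n₂
    have hj1 : 1 ≤ jb n₂ := one_le_jb n₂
    have hprod_le : ∏ i, (1+((n₂ i : ℝ))^2) ≤ (jb n₂^2)^3 := by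
      have hle : ∀ i ∈ Finset.univ, 1+((n₂ i:ℝ))^2 ≤ jb n₂^2 := by
        intro i _
        rw [jb_sq]
        have h2 : ((n₂ i:ℝ))^2 ≤ ∑ j, ((n₂ j:ℝ))^2 := by
          simpa using Finset.single_le_sum (f := fun j => ((n₂ j:ℝ))^2)
            (fun j _ => sq_nonneg _) (Finset.mem_univ i)
        linarith
      calc ∏ i, (1+((n₂ i:ℝ))^2) ≤ ∏ _i : Fin 3, jb n₂^2 :=
            Finset.prod_le_prod (fun i _ => by positivity) hle
        _ = (jb n₂^2)^3 := by simp [Finset.prod_const]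
    have hrw : jb n₂ ^ (-(3+ε)) = (((jb n₂^2)^3 : ℝ)) ^ (-q) := by
      rw [show ((jb n₂^2)^3 : ℝ) = jb n₂^(6:ℕ) by ring, ← Real.rpow_natCast (jb n₂) 6,
        ← Real.rpow_mul (by linarith : (0:ℝ) ≤ jb n₂)]
      norm_num [hq]
      ring_nf
    rw [hrw]
    have hmono : (((jb n₂^2)^3 : ℝ)) ^ (-q) ≤ (∏ i, (1+((n₂ i:ℝ))^2)) ^ (-q) :=
      Real.rpow_le_rpow_of_nonpos (by positivity) hprod_le (by linarith)
    refine hmono.trans (le_of_eq ?_)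
    rw [← Real.finset_prod_rpow _ _ (fun i _ => by positivity) (-q)]
  calc ∑ n₂ ∈ Finset.Icc (fun _ => -(N : ℤ)) (fun _ => (N : ℤ)), jb n₂ ^ (-(3+ε))
      ≤ ∑ n₂ ∈ Finset.Icc (fun _ => -(N : ℤ)) (fun _ => (N : ℤ)), ∏ i, u (n₂ i) :=
        Finset.sum_le_sum (fun n₂ _ => hpt n₂)
    _ = ∑ n₂ ∈ Fintype.piFinset (fun _ : Fin 3 => Finset.Icc (-(N:ℤ)) N), ∏ i, u (n₂ i) := by
        rw [Pi.Icc_eq]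
    _ = ∏ _i : Fin 3, ∑ k ∈ Finset.Icc (-(N:ℤ)) N, u k := (Finset.prod_univ_sum _ _).symm
    _ = (∑ k ∈ Finset.Icc (-(N:ℤ)) N, u k)^3 := by simp [Finset.prod_const]
    _ ≤ S^3 := by
        have hnn : (0:ℝ) ≤ ∑ k ∈ Finset.Icc (-(N:ℤ)) N, u k := by positivity
        exact pow_le_pow_left₀ hnn (Summable.sum_le_tsum _ (fun k _ => (hu_pos k).le) hsum) 3

lemma hjb2_of_filter (θ : ℝ) (hθ : θ ≤ 1/2) (n x : Fin 3 → ℤ)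
    (h : jb n ≤ jb x ^ θ) : jb n ^ 2 ≤ jb x := by
  have hx1 : 1 ≤ jb x := one_le_jb x
  have h3 : jb n ≤ jb x ^ (1/2:ℝ) :=
    h.trans (Real.rpow_le_rpow_of_exponent_le hx1 hθ)
  have h4 : jb n ^ 2 ≤ (jb x ^ (1/2:ℝ))^2 :=
    pow_le_pow_left₀ (by linarith [one_le_jb n]) h3 2
  refine h4.trans (le_of_eq ?_)
  rw [← Real.rpow_natCast (jb x ^ (1/2:ℝ)) 2, ← Real.rpow_mul (by linarith)]
  norm_num

lemma perterm (δ : ℝ) (hδ0 : 0 < δ) (hδ1 : δ ≤ 1) (n x : Fin 3 → ℤ)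
    (h2 : jb n ^ 2 ≤ jb x) :
    jb n ^ 2 / jb x ^ 4 ≤ jb n ^ δ * jb x ^ (-(3+δ/2)) := by
  have hn0 : 0 < jb n := jb_pos n
  have hx0 : 0 < jb x := jb_pos x
  have a1 : jb n ^ (2:ℝ) = jb n ^ (2:ℕ) := by exact_mod_cast Real.rpow_natCast (jb n) 2
  have a2 : jb x ^ ((4:ℕ):ℝ) = jb x ^ (4:ℕ) := Real.rpow_natCast (jb x) 4
  have e2 : jb n ^ 2 / jb x ^ 4 = jb n ^ (2:ℝ) * jb x ^ (-4 : ℝ) := by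
    rw [show (-4:ℝ) = -((4:ℕ):ℝ) by norm_num, Real.rpow_neg hx0.le, a2, a1, div_eq_mul_inv]
  have e3 : jb x ^ (-4:ℝ) = jb x ^ (-(3+δ/2)) * jb x ^ (-(1-δ/2)) := by
    rw [← Real.rpow_add hx0]
    congr 1
    ring
  have e4 : jb x ^ (-(1-δ/2)) ≤ (jb n ^ (2:ℝ)) ^ (-(1-δ/2)) := by
    apply Real.rpow_le_rpow_of_nonpos (by positivity) ?_ (by linarith)
    rw [a1]
    exact h2
  have e5 : (jb n ^ (2:ℝ)) ^ (-(1-δ/2)) = jb n ^ (δ - 2) := by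
    rw [← Real.rpow_mul hn0.le]
    congr 1
    ring
  have key : jb n ^ (2:ℝ) * jb n ^ (δ-2) = jb n ^ δ := by
    rw [← Real.rpow_add hn0]
    congr 1
    ring
  calc jb n ^ 2 / jb x ^ 4 = jb n ^ (2:ℝ) * jb x ^ (-4:ℝ) := e2
    _ = jb n ^ (2:ℝ) * (jb x ^ (-(3+δ/2)) * jb x ^ (-(1-δ/2))) := by rw [e3]
    _ ≤ jb n ^ (2:ℝ) * (jb x ^ (-(3+δ/2)) * jb n ^ (δ-2)) := by
        have h5 := e4.trans (le_of_eq e5)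
        gcongr
    _ = jb n ^ δ * jb x ^ (-(3+δ/2)) := by
        rw [show jb n ^ (2:ℝ) * (jb x ^ (-(3+δ/2)) * jb n ^ (δ-2))
          = (jb n ^ (2:ℝ) * jb n ^ (δ-2)) * jb x ^ (-(3+δ/2)) by ring, key]

lemma half_pair_bound (s : Finset (Fin 3 → ℤ)) (f g : (Fin 3 → ℤ) → ℝ)
    (hsymm : ∀ x ∈ s, -x ∈ s) (hbd : ∀ x ∈ s, |f x + f (-x)| ≤ g x) :
    |∑ x ∈ s, f x| ≤ (1/2) * ∑ x ∈ s, g x := by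
  have hre : ∑ x ∈ s, f x = ∑ x ∈ s, f (-x) := by
    apply Finset.sum_equiv (Equiv.neg (Fin 3 → ℤ))
    · intro i
      constructor
      · intro h
        simpa using hsymm i h
      · intro h
        have h2 := hsymm (-i) (by simpa using h)
        rwa [neg_neg] at h2
    · intro i _
      simp
  have h3 : 2 * |∑ x ∈ s, f x| ≤ ∑ x ∈ s, g x := by
    calc 2 * |∑ x ∈ s, f x| = |∑ x ∈ s, f x + ∑ x ∈ s, f (-x)| := by
          rw [← hre, ← two_mul, abs_mul]
          norm_num
      _ = |∑ x ∈ s, (f x + f (-x))| := by rw [Finset.sum_add_distrib]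
      _ ≤ ∑ x ∈ s, |f x + f (-x)| := Finset.abs_sum_le_sum_abs _ _
      _ ≤ ∑ x ∈ s, g x := Finset.sum_le_sum hbd
  linarith


set_option maxHeartbeats 1000000 in
theorem truncated_oscillatory_sum_uniform_bound
    (T : ℝ) (hT : 0 < T) (θ δ : ℝ)
    (hθ0 : 0 < θ) (hθ : θ ≤ 1 / 2) (hδ0 : 0 < δ) (hδ1 : δ ≤ 1) :
    ∃ C : ℝ, 0 < C ∧ ∀ (n : Fin 3 → ℤ) (N : ℕ) (τ : ℝ), τ ∈ Set.Icc 0 T →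
      |∑ n₂ ∈ (Finset.Icc (fun _ => -(N : ℤ)) (fun _ => (N : ℤ))).filter
            (fun n₂ => jb n ≤ jb n₂ ^ θ ∧ enorm' n₂ ≤ (N : ℝ)),
          Real.sin (τ * (jb (n + n₂) - jb n₂)) / (jb (n + n₂) * jb n₂ ^ 2)|
        ≤ C * jb n ^ δ := by
  obtain ⟨K, hK0, hKb⟩ := count_bound (δ/2) (by linarith)
  refine ⟨(80*T+256)*K + 1, by positivity, ?_⟩
  intro n N τ hτ
  obtain ⟨hτ0, hτT⟩ := hτ
  have hsymm : ∀ x ∈ (Finset.Icc (fun _ => -(N : ℤ)) (fun _ => (N : ℤ))).filter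
      (fun n₂ => jb n ≤ jb n₂ ^ θ ∧ enorm' n₂ ≤ (N : ℝ)),
      -x ∈ (Finset.Icc (fun _ => -(N : ℤ)) (fun _ => (N : ℤ))).filter
      (fun n₂ => jb n ≤ jb n₂ ^ θ ∧ enorm' n₂ ≤ (N : ℝ)) := by
    intro x hx
    rw [Finset.mem_filter] at hx ⊢
    obtain ⟨hb, h1, h2⟩ := hx
    refine ⟨?_, ?_, ?_⟩
    · simp only [Finset.mem_Icc, Pi.le_def, Pi.neg_apply] at hb ⊢
      constructor <;> intro i
      · have := hb.2 i
        omega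
      · have := hb.1 i
        omega
    · rwa [jb_neg]
    · rwa [enorm'_neg]
  have hpair : ∀ x ∈ (Finset.Icc (fun _ => -(N : ℤ)) (fun _ => (N : ℤ))).filter
      (fun n₂ => jb n ≤ jb n₂ ^ θ ∧ enorm' n₂ ≤ (N : ℝ)),
      |Real.sin (τ * (jb (n + x) - jb x)) / (jb (n + x) * jb x ^ 2)
        + Real.sin (τ * (jb (n + -x) - jb (-x))) / (jb (n + -x) * jb (-x) ^ 2)|
        ≤ (80*T+256) * (jb n^2 / jb x^4) := by
    intro x hx
    rw [Finset.mem_filter] at hx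
    have hj2 : jb n^2 ≤ jb x := hjb2_of_filter θ hθ n x hx.2.1
    have hpb := pair_bound T τ hτ0 hτT n x hj2
    rw [jb_neg]
    exact hpb
  have hhalf := half_pair_bound _
    (fun x => Real.sin (τ * (jb (n + x) - jb x)) / (jb (n + x) * jb x ^ 2))
    (fun x => (80*T+256) * (jb n^2 / jb x^4)) hsymm hpair
  refine hhalf.trans ?_
  have hrpow : (0:ℝ) ≤ jb n ^ δ := (Real.rpow_pos_of_pos (jb_pos n) δ).le
  have hc0 : (0:ℝ) ≤ 80*T+256 := by linarith
  have hsum2 : ∑ x ∈ (Finset.Icc (fun _ => -(N : ℤ)) (fun _ => (N : ℤ))).filter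
      (fun n₂ => jb n ≤ jb n₂ ^ θ ∧ enorm' n₂ ≤ (N : ℝ)),
      (80*T+256) * (jb n^2 / jb x^4) ≤ (80*T+256) * (K * jb n ^ δ) := by
    rw [← Finset.mul_sum]
    apply mul_le_mul_of_nonneg_left ?_ hc0
    calc ∑ x ∈ (Finset.Icc (fun _ => -(N : ℤ)) (fun _ => (N : ℤ))).filter
          (fun n₂ => jb n ≤ jb n₂ ^ θ ∧ enorm' n₂ ≤ (N : ℝ)), jb n^2/jb x^4
        ≤ ∑ x ∈ (Finset.Icc (fun _ => -(N : ℤ)) (fun _ => (N : ℤ))).filter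
          (fun n₂ => jb n ≤ jb n₂ ^ θ ∧ enorm' n₂ ≤ (N : ℝ)),
            jb n ^ δ * jb x ^ (-(3+δ/2)) := by
          apply Finset.sum_le_sum
          intro x hx
          rw [Finset.mem_filter] at hx
          exact perterm δ hδ0 hδ1 n x (hjb2_of_filter θ hθ n x hx.2.1)
      _ = jb n ^ δ * ∑ x ∈ (Finset.Icc (fun _ => -(N : ℤ)) (fun _ => (N : ℤ))).filter
          (fun n₂ => jb n ≤ jb n₂ ^ θ ∧ enorm' n₂ ≤ (N : ℝ)), jb x ^ (-(3+δ/2)) := by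
          rw [Finset.mul_sum]
      _ ≤ jb n ^ δ * ∑ x ∈ Finset.Icc (fun _ => -(N : ℤ)) (fun _ => (N : ℤ)),
            jb x ^ (-(3+δ/2)) := by
          apply mul_le_mul_of_nonneg_left ?_ hrpow
          apply Finset.sum_le_sum_of_subset_of_nonneg (Finset.filter_subset _ _)
          intro x _ _
          exact (Real.rpow_pos_of_pos (jb_pos x) _).le
      _ ≤ jb n ^ δ * K := mul_le_mul_of_nonneg_left (hKb N) hrpow
      _ = K * jb n ^ δ := mul_comm _ _
  have hfin : (1/2:ℝ) * ((80*T+256) * (K * jb n ^ δ)) ≤ ((80*T+256)*K + 1) * jb n ^ δ := by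
    nlinarith [mul_nonneg (mul_nonneg hc0 hK0.le) hrpow, hrpow]
  calc (1/2:ℝ) * ∑ x ∈ (Finset.Icc (fun _ => -(N : ℤ)) (fun _ => (N : ℤ))).filter
        (fun n₂ => jb n ≤ jb n₂ ^ θ ∧ enorm' n₂ ≤ (N : ℝ)),
        (80*T+256) * (jb n^2 / jb x^4)
      ≤ (1/2:ℝ) * ((80*T+256) * (K * jb n ^ δ)) := by linarith [hsum2]
    _ ≤ ((80*T+256)*K + 1) * jb n ^ δ := hfin
end
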